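/- Let G be a group whose cardinality κ = |G| is a singular cardinal. If a subset A of G is left κ-thick, then A is right κ-large. -/

import Mathlib

open scoped Pointwise
open Cardinal

universe u

variable {G : Type u}

/-- `A` is left `κ`-large: `G = F * A` for some `F` with `|F| < κ`. -/
def LeftLarge [Group G] (κ : Cardinal.{u}) (A : Set G) : Prop :=
  ∃ F : Set G, #F < κ ∧ F * A = Set.univ

/-- `A` is right `κ`-large: `G = A * F` for some `F` with `|F| < κ`. -/
def RightLarge [Group G] (κ : Cardinal.{u}) (A : Set G) : Prop :=
  ∃ F : Set G, #F < κ ∧ A * F = Set.univ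

/-- `A` is `κ`-large: `G = F * A * F` for some `F` with `|F| < κ`. -/
def KLarge [Group G] (κ : Cardinal.{u}) (A : Set G) : Prop :=
  ∃ F : Set G, #F < κ ∧ F * A * F = Set.univ

/-- `A` is left `κ`-thick: for every `F` with `|F| < κ` there is `a ∈ A` with `F * a ⊆ A`. -/
def LeftThick [Group G] (κ : Cardinal.{u}) (A : Set G) : Prop :=
  ∀ F : Set G, #F < κ → ∃ a ∈ A, F * {a} ⊆ A

/-- `A` is right `κ`-thick: for every `F` with `|F| < κ` there is `a ∈ A` with `a * F ⊆ A`. -/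
def RightThick [Group G] (κ : Cardinal.{u}) (A : Set G) : Prop :=
  ∀ F : Set G, #F < κ → ∃ a ∈ A, {a} * F ⊆ A

/-- `A` is `κ`-thick: for every `F` with `|F| < κ` there is `a ∈ A` with `F * a * F ⊆ A`. -/
def KThick [Group G] (κ : Cardinal.{u}) (A : Set G) : Prop :=
  ∀ F : Set G, #F < κ → ∃ a ∈ A, F * {a} * F ⊆ A

/-- `G` is `κ`-normal: every subset of size `< κ` lies in a normal subgroup of size `< κ`. -/
def KNormal (G : Type u) [Group G] (κ : Cardinal.{u}) : Prop :=
  ∀ F : Set G, #F < κ → ∃ H : Subgroup G, H.Normal ∧ #(H : Set G) < κ ∧ F ⊆ (H : Set G)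

/-- `κ` is a singular cardinal: infinite, with cofinality strictly less than `κ`. -/
def Singular (κ : Cardinal.{u}) : Prop := ℵ₀ ≤ κ ∧ κ.ord.cof < κ

/-- In a group of singular cardinality `κ`,
every left `κ`-thick set is right `κ`-large. -/
theorem leftThick_rightLarge_of_singular {G : Type u} [Group G]
    (κ : Cardinal.{u}) (hκ : #G = κ) (hsing : Singular κ)
    (A : Set G) (hA : LeftThick κ A) : RightLarge κ A := by
  obtain ⟨hinf, hcof⟩ := hsing
  -- identify G with κ.ord.toType
  have hmk : #G = #κ.ord.ToType := by
    rw [Cardinal.mk_toType, Cardinal.card_ord, hκ]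
  obtain ⟨e⟩ := Cardinal.eq.1 hmk
  -- unbounded set S of size cof κ.ord
  obtain ⟨S, hSub, hScard⟩ := Order.exists_cof_eq κ.ord.ToType
  have hSlt : #S < κ := by
    rwa [hScard, Ordinal.cof_toType]
  -- for each i ∈ S, the "initial segment" in G
  have hseg : ∀ i : κ.ord.ToType, #(e ⁻¹' Set.Iic i) < κ := by
    intro i
    have h1 : #(Set.Iic i) < κ := by
      have : Set.Iic i ⊆ insert i (Set.Iio i) := by
        intro x hx
        rcases lt_or_eq_of_le (Set.mem_Iic.1 hx) with h | h
        · exact Set.mem_insert_of_mem _ h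
        · exact h ▸ Set.mem_insert _ _
      calc #(Set.Iic i) ≤ #(insert i (Set.Iio i) : Set _) := Cardinal.mk_le_mk_of_subset this
        _ ≤ #(Set.Iio i) + 1 := Cardinal.mk_insert_le
        _ < κ := Cardinal.add_lt_of_lt hinf (Cardinal.mk_Iio_ord_toType i)
          (lt_of_lt_of_le Cardinal.one_lt_aleph0 hinf)
    calc #(e ⁻¹' Set.Iic i) ≤ #(Set.Iic i) := Cardinal.mk_preimage_of_injective _ _ e.injective
      _ < κ := h1
  -- choose translating elements
  have hch : ∀ i : S, ∃ a ∈ A, (e ⁻¹' Set.Iic (i : κ.ord.ToType)) * {a} ⊆ A := fun i =>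
    hA _ (hseg i)
  choose a ha hsub using hch
  refine ⟨Set.range fun i : S => (a i)⁻¹, ?_, ?_⟩
  · exact lt_of_le_of_lt Cardinal.mk_range_le hSlt
  · ext g
    simp only [Set.mem_univ, iff_true]
    obtain ⟨i, hiS, hi⟩ := hSub (e g)
    have hg : g ∈ e ⁻¹' Set.Iic i := Set.mem_preimage.2 (Set.mem_Iic.2 hi)
    have hmem : g * a ⟨i, hiS⟩ ∈ A :=
      hsub ⟨i, hiS⟩ (Set.mul_mem_mul hg (Set.mem_singleton _))
    have : g = (g * a ⟨i, hiS⟩) * (a ⟨i, hiS⟩)⁻¹ := by group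
    rw [this]
    exact Set.mul_mem_mul hmem ⟨⟨i, hiS⟩, rfl⟩
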